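/- Let ω, c, E ∈ ℝ and ζ ∈ ℂ. Let R, θ : ℝ → ℝ be twice continuously differentiable with R(x) > 0, θ'(x) = c/R(x)², and suppose the first integral (R'(x))² + R(x)⁴ + 2ωR(x)² + c²/R(x)² = 2E holds for all x. Set φ = R e^{iθ} and define A(x) = −iζ² + (i/2)|φ(x)|² + (i/2)ω, B(x) = ζφ(x) + (i/2)φ'(x), C(x) = −ζ·conj(φ(x)) + (i/2)·conj(φ)'(x). Then for every x ∈ ℝ, A(x)² + B(x)C(x) = −ζ⁴ + ωζ² + cζ − (ω² + 2E)/4. -/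

import Mathlib

/-- For an elliptic stationary solution `φ = R e^{iθ}` of focusing NLS with
`θ' = c/R²` and first integral `(R')² + R⁴ + 2ωR² + c²/R² = 2E`, and for `A`, `B`, `C`
the entries of the temporal Lax matrix, one has for every `x`:
`A(x)² + B(x)C(x) = −ζ⁴ + ωζ² + cζ − (ω² + 2E)/4`. -/
theorem lax_A_sq_add_BC_value
    (ω c E : ℝ) (ζ : ℂ) (R θ : ℝ → ℝ)
    (hR : ContDiff ℝ 2 R) (hθ : ContDiff ℝ 2 θ)
    (hRpos : ∀ x : ℝ, 0 < R x)
    (hθ' : ∀ x : ℝ, deriv θ x = c / R x ^ 2)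
    (hfirst : ∀ x : ℝ,
      (deriv R x) ^ 2 + R x ^ 4 + 2 * ω * R x ^ 2 + c ^ 2 / R x ^ 2 = 2 * E)
    (φ : ℝ → ℂ)
    (hφ : ∀ x : ℝ, φ x = ((R x : ℝ) : ℂ) * Complex.exp (Complex.I * ((θ x : ℝ) : ℂ)))
    (A B C : ℝ → ℂ)
    (hA : ∀ x : ℝ, A x = -Complex.I * ζ ^ 2 +
      (Complex.I / 2) * ((‖φ x‖ : ℝ) : ℂ) ^ 2 + (Complex.I / 2) * (ω : ℂ))
    (hB : ∀ x : ℝ, B x = ζ * φ x + (Complex.I / 2) * deriv φ x)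
    (hC : ∀ x : ℝ, C x = -ζ * (starRingEnd ℂ) (φ x) +
      (Complex.I / 2) * deriv (fun y => (starRingEnd ℂ) (φ y)) x) :
    ∀ x : ℝ, A x ^ 2 + B x * C x =
      -ζ ^ 4 + (ω : ℂ) * ζ ^ 2 + (c : ℂ) * ζ - (((ω ^ 2 + 2 * E) / 4 : ℝ) : ℂ) := by
  intro x
  have hRd : HasDerivAt R (deriv R x) x :=
    ((hR.differentiable (by norm_num)) x).hasDerivAt
  have hθd : HasDerivAt θ (deriv θ x) x :=
    ((hθ.differentiable (by norm_num)) x).hasDerivAt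
  set r : ℝ := R x with hr
  set r' : ℝ := deriv R x with hr'
  set t : ℝ := θ x with ht
  set t' : ℝ := deriv θ x with ht'
  set e : ℂ := Complex.exp (Complex.I * (t : ℂ)) with he
  have hred : HasDerivAt (fun y : ℝ => ((R y : ℝ) : ℂ)) (r' : ℂ) x :=
    hRd.ofReal_comp
  have hexpd : HasDerivAt (fun y : ℝ => Complex.exp (Complex.I * ((θ y : ℝ) : ℂ)))
      (e * (Complex.I * (t' : ℂ))) x := by
    have h1 : HasDerivAt (fun y : ℝ => Complex.I * ((θ y : ℝ) : ℂ))
        (Complex.I * (t' : ℂ)) x := (hθd.ofReal_comp).const_mul Complex.I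
    simpa [he] using h1.cexp
  have hφd : HasDerivAt φ ((r' : ℂ) * e + (r : ℂ) * (e * (Complex.I * (t' : ℂ)))) x := by
    have := hred.mul hexpd
    refine HasDerivAt.congr_of_eventuallyEq this ?_
    filter_upwards with y
    rw [hφ y]
    rfl
  have hdφ : deriv φ x = (r' : ℂ) * e + (r : ℂ) * (e * (Complex.I * (t' : ℂ))) :=
    hφd.deriv
  have hconjd : HasDerivAt (fun y => (starRingEnd ℂ) (φ y))
      ((starRingEnd ℂ) ((r' : ℂ) * e + (r : ℂ) * (e * (Complex.I * (t' : ℂ))))) x := by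
    simpa [Function.comp_def, Complex.conjCAE_apply] using (Complex.conjCLE.hasFDerivAt.comp_hasDerivAt x hφd)
  have hdconj : deriv (fun y => (starRingEnd ℂ) (φ y)) x
      = (starRingEnd ℂ) ((r' : ℂ) * e + (r : ℂ) * (e * (Complex.I * (t' : ℂ)))) :=
    hconjd.deriv
  have hr0 : (r : ℂ) ≠ 0 := by
    exact_mod_cast (hRpos x).ne'
  have habs : ‖φ x‖ = r := by
    rw [hφ x]
    simp [Complex.norm_exp, abs_of_pos (hRpos x), hr]
  have hee : e * (starRingEnd ℂ) e = 1 := by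
    have h1 : ‖e‖ = 1 := by simp [he, Complex.norm_exp]
    rw [Complex.mul_conj, Complex.normSq_eq_norm_sq, h1]
    norm_num
  have hfi : ((r' : ℂ)) ^ 2 + (r : ℂ) ^ 4 + 2 * (ω : ℂ) * (r : ℂ) ^ 2
      + (c : ℂ) ^ 2 / (r : ℂ) ^ 2 = 2 * (E : ℂ) := by
    exact_mod_cast congrArg (Complex.ofReal) (hfirst x)
  have htc : (t' : ℂ) = (c : ℂ) / (r : ℂ) ^ 2 := by
    exact_mod_cast congrArg (Complex.ofReal) (hθ' x)
  have hφx : φ x = (r : ℂ) * e := by rw [hφ x]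
  have htc2 : (r:ℂ)^2 * (t':ℂ) = (c:ℂ) := by
    have hre : t' * R x ^ 2 = c := by
      rw [ht', hθ' x]
      field_simp [(hRpos x).ne']
    exact_mod_cast congrArg Complex.ofReal (by linarith [hre] : (R x : ℝ)^2 * t' = c)
  have hE : ((r':ℂ))^2 + (r:ℂ)^4 + 2*(ω:ℂ)*(r:ℂ)^2 + (c:ℂ)*(t':ℂ) = 2*(E:ℂ) := by
    have hre : deriv R x ^ 2 + R x ^ 4 + 2*ω*R x ^2 + c * t' = 2*E := by
      rw [ht', hθ' x]
      linear_combination hfirst x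
    exact_mod_cast congrArg Complex.ofReal hre
  rw [hA x, hB x, hC x, habs, hφx, hdφ, hdconj]
  simp only [map_add, map_mul, Complex.conj_ofReal, Complex.conj_I]
  push_cast
  linear_combination (-(r':ℂ)^2/4 - ζ^2*(r:ℂ)^2 + ζ*(r:ℂ)^2*(t':ℂ)
      - (r:ℂ)^2*(t':ℂ)^2/4) * hee + (ζ - (t':ℂ)/4) * htc2 - (1/4 : ℂ) * hE
    + ((-ζ^2 + (r:ℂ)^2/2 + (ω:ℂ)/2)^2
      + e * (starRingEnd ℂ) e * ((r':ℂ)^2/4 - ζ*(r:ℂ)^2*(t':ℂ)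
        + (1 - Complex.I^2)*(r:ℂ)^2*(t':ℂ)^2/4)) * Complex.I_sq
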